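/- arXiv:2007.11550 — 5 statements merged into one kernel-verified Lean document; each statement's English description precedes it below -/
import Mathlib

section
/- Let N be a finite-index subgroup of ℤ × ℤ and let r denote its index. Define M := {m ∈ ℤ × ℤ : for every n ∈ N, the standard inner product ⟨n, m⟩ = n₁m₁ + n₂m₂ is divisible by r}. Then M is exactly the image of N under rotation by π/2, i.e., M = {(−y, x) : (x, y) ∈ N}. -/
-- Step 1: the SNF of a finite-index subgroup of ℤ² has rank 2
lemma aux_rank_two (N : AddSubgroup (ℤ × ℤ)) (hN : N.index ≠ 0) {n : ℕ}
    (bM : Module.Basis (Fin 2) ℤ (ℤ × ℤ))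
    (bN : Module.Basis (Fin n) ℤ (AddSubgroup.toIntSubmodule N))
    (f : Fin n ↪ Fin 2) (a : Fin n → ℤ)
    (hsnf : ∀ i, ((bN i : AddSubgroup.toIntSubmodule N) : ℤ × ℤ) = a i • bM (f i)) :
    n = 2 := by
  by_contra hn2
  have hle : n ≤ 2 := by simpa using Fintype.card_le_of_embedding f
  have hns : ¬ Function.Surjective f := by
    intro hs
    have := Fintype.card_le_of_surjective f hs
    simp at this; omega
  obtain ⟨j, hj⟩ := not_forall.mp hns
  -- the coordinate functional at j kills N
  set ψ : (ℤ × ℤ) →+ ℤ := (bM.coord j).toAddMonoidHom with hψ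
  have hNker : N ≤ ψ.ker := by
    intro x hx
    have hx' : x ∈ AddSubgroup.toIntSubmodule N := by
      exact hx
    set y : AddSubgroup.toIntSubmodule N := ⟨x, hx'⟩ with hy
    have hsum : (y : ℤ × ℤ) = ∑ i, bN.repr y i • ((bN i : AddSubgroup.toIntSubmodule N) : ℤ × ℤ) := by
      conv_lhs => rw [← bN.sum_repr y]
      push_cast
      rfl
    have : ψ x = 0 := by
      have hx0 : x = ∑ i, bN.repr y i • (a i • bM (f i)) := by
        simpa [hsnf] using hsum
      rw [hx0, map_sum]
      refine Finset.sum_eq_zero fun i _ => ?_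
      have hfij : f i ≠ j := fun h => hj ⟨i, h⟩
      rw [map_zsmul, map_zsmul]
      have : ψ (bM (f i)) = 0 := by
        simp [hψ, Module.Basis.coord_apply, Module.Basis.repr_self_apply, hfij]
      rw [this, smul_zero, smul_zero]
    simpa [AddMonoidHom.mem_ker] using this
  have hsurj : Function.Surjective ψ := by
    intro k
    refine ⟨k • bM j, ?_⟩
    rw [map_zsmul]
    have : ψ (bM j) = 1 := by simp [hψ, Module.Basis.coord_apply, Module.Basis.repr_self_apply]
    rw [this, smul_eq_mul, mul_one]
  have hker0 : ψ.ker.index = 0 := by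
    rw [AddSubgroup.index_ker]
    have : Function.Surjective ψ := hsurj
    have hrange : ψ.range = ⊤ := AddMonoidHom.range_eq_top_of_surjective _ this
    rw [hrange]
    have : Nat.card (⊤ : AddSubgroup ℤ) = Nat.card ℤ :=
      Nat.card_congr AddSubgroup.topEquiv.toEquiv
    rw [this]
    exact Nat.card_eq_zero_of_infinite
  have := AddSubgroup.index_dvd_of_le hNker
  rw [hker0] at this
  exact hN (zero_dvd_iff.mp this)

lemma aux_exists_basis (N : AddSubgroup (ℤ × ℤ)) (hN : N.index ≠ 0) :
    ∃ g h : ℤ × ℤ, g ∈ N ∧ h ∈ N ∧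
      (∀ x ∈ N, ∃ α β : ℤ, x = α • g + β • h) ∧
      (g.1 * h.2 - g.2 * h.1).natAbs = N.index := by
  obtain ⟨n, bM, bN, f, a, hsnf⟩ :=
    (AddSubgroup.toIntSubmodule N).smithNormalForm (Module.Basis.finTwoProd ℤ)
  have hn : n = 2 := aux_rank_two N hN bM bN f a hsnf
  subst hn
  have hFin : ∀ i : Fin 2, i = 0 ∨ i = 1 := by decide
  set g : ℤ × ℤ := (bN 0 : ℤ × ℤ) with hg
  set h : ℤ × ℤ := (bN 1 : ℤ × ℤ) with hh
  have hgN : g ∈ N := (bN 0).2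
  have hhN : h ∈ N := (bN 1).2
  -- the spanning property
  have hspan : ∀ x ∈ N, ∃ α β : ℤ, x = α • g + β • h := by
    intro x hx
    refine ⟨bN.repr ⟨x, hx⟩ 0, bN.repr ⟨x, hx⟩ 1, ?_⟩
    have hsum : ((⟨x, hx⟩ : AddSubgroup.toIntSubmodule N) : ℤ × ℤ)
        = ∑ i, bN.repr ⟨x, hx⟩ i • ((bN i : AddSubgroup.toIntSubmodule N) : ℤ × ℤ) := by
      conv_lhs => rw [← bN.sum_repr ⟨x, hx⟩]
      push_cast
      rfl
    simpa [Fin.sum_univ_two] using hsum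
  refine ⟨g, h, hgN, hhN, hspan, ?_⟩
  -- f is an equivalence
  have hfbij : Function.Bijective f := ⟨f.injective, by
    have := Finite.injective_iff_bijective.mp f.injective
    exact this.2⟩
  set fe : Fin 2 ≃ Fin 2 := Equiv.ofBijective f hfbij with hfe
  have hfe_app : ∀ i, fe i = f i := fun i => rfl
  have hne10 : f 1 ≠ f 0 := fun hcon => by simpa using f.injective hcon
  have hne01 : f 0 ≠ f 1 := fun hcon => by simpa using f.injective hcon
  have hco : ∀ (c : ℤ) (i k : Fin 2), bM.repr (c • bM i) k = if i = k then c else 0 := by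
    intro c i k
    rw [map_zsmul, Finsupp.smul_apply, Module.Basis.repr_self_apply, smul_eq_mul, mul_ite, mul_one,
      mul_zero]
  have hrc : ∀ (α β : ℤ) (k : Fin 2), bM.repr (α • (a 0 • bM (f 0)) + β • (a 1 • bM (f 1))) k
      = (if f 0 = k then α * a 0 else 0) + (if f 1 = k then β * a 1 else 0) := by
    intro α β k
    rw [map_add, Finsupp.add_apply, smul_smul, smul_smul, hco, hco]
  -- membership is divisibility of bM-coordinates
  have hrepr : ∀ x : ℤ × ℤ, x ∈ N ↔ (a 0 ∣ bM.repr x (f 0) ∧ a 1 ∣ bM.repr x (f 1)) := by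
    intro x
    constructor
    · intro hx
      obtain ⟨α, β, rfl⟩ := hspan x hx
      rw [hg, hh, hsnf 0, hsnf 1]
      constructor
      · rw [hrc, if_pos rfl, if_neg hne10, add_zero]
        exact ⟨α, mul_comm _ _⟩
      · rw [hrc, if_neg hne01, if_pos rfl, zero_add]
        exact ⟨β, mul_comm _ _⟩
    · rintro ⟨⟨c₀, hc₀⟩, ⟨c₁, hc₁⟩⟩
      have hx : x = c₀ • g + c₁ • h := by
        apply bM.repr.injective
        ext j
        obtain ⟨i, rfl⟩ : ∃ i, f i = j := fe.surjective j
        rw [hg, hh, hsnf 0, hsnf 1]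
        rw [hrc]
        rcases hFin i with rfl | rfl
        · rw [if_pos rfl, if_neg hne10, add_zero, hc₀, mul_comm]
        · rw [if_neg hne01, if_pos rfl, zero_add, hc₁, mul_comm]
      rw [hx]
      exact N.add_mem (N.zsmul_mem hgN _) (N.zsmul_mem hhN _)
  -- compute the index via a pi subgroup
  set P : AddSubgroup (Fin 2 → ℤ) :=
    AddSubgroup.pi Set.univ (fun j => AddSubgroup.zmultiples (a (fe.symm j))) with hP
  set E : (ℤ × ℤ) →+ (Fin 2 → ℤ) := bM.equivFun.toLinearMap.toAddMonoidHom with hE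
  have hEsurj : Function.Surjective E := bM.equivFun.surjective
  have hNP : N = P.comap E := by
    ext x
    rw [AddSubgroup.mem_comap, hP, AddSubgroup.mem_pi, hrepr]
    constructor
    · rintro ⟨h0, h1⟩ j _
      rw [Int.mem_zmultiples_iff]
      have : E x j = bM.repr x j := by simp [hE, Module.Basis.equivFun_apply]
      rw [this]
      obtain ⟨i, rfl⟩ : ∃ i, f i = j := fe.surjective j
      have : fe.symm (f i) = i := by
        rw [← hfe_app]; exact fe.symm_apply_apply i
      rw [this]
      rcases hFin i with rfl | rfl
      · exact h0
      · exact h1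
    · intro hj
      constructor
      · have := hj (f 0) trivial
        rw [Int.mem_zmultiples_iff] at this
        have h2 : fe.symm (f 0) = 0 := by rw [← hfe_app]; exact fe.symm_apply_apply 0
        rw [h2] at this
        simpa [hE, Module.Basis.equivFun_apply] using this
      · have := hj (f 1) trivial
        rw [Int.mem_zmultiples_iff] at this
        have h2 : fe.symm (f 1) = 1 := by rw [← hfe_app]; exact fe.symm_apply_apply 1
        rw [h2] at this
        simpa [hE, Module.Basis.equivFun_apply] using this
  have hindex : N.index = (a 0).natAbs * (a 1).natAbs := by
    rw [hNP, AddSubgroup.index_comap_of_surjective _ hEsurj, hP, AddSubgroup.index_pi]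
    rw [Fin.prod_univ_two, Int.index_zmultiples, Int.index_zmultiples]
    rcases hFin (fe.symm 0) with h0 | h0 <;> rcases hFin (fe.symm 1) with h1 | h1
    · exfalso; exact (by simpa [h0, h1] using fe.symm.injective (h0.trans h1.symm) : False)
    · rw [h0, h1]
    · rw [h0, h1, mul_comm]
    · exfalso; exact (by simpa [h0, h1] using fe.symm.injective (h0.trans h1.symm) : False)
  -- compute the determinant
  have hu : IsUnit ((Module.Basis.finTwoProd ℤ).det ⇑bM) := (Module.Basis.finTwoProd ℤ).isUnit_det bM
  have hudet : (Module.Basis.finTwoProd ℤ).det ⇑bM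
      = (bM 0).1 * (bM 1).2 - (bM 0).2 * (bM 1).1 := by
    rw [Module.Basis.det_apply, Matrix.det_fin_two]
    simp [Module.Basis.toMatrix_apply, Module.Basis.coe_finTwoProd_repr]
    ring
  have hu1 : ((bM 0).1 * (bM 1).2 - (bM 0).2 * (bM 1).1).natAbs = 1 := by
    rw [← hudet]
    rcases Int.isUnit_iff.mp hu with h | h <;> rw [h] <;> rfl
  have hgh : g = a 0 • bM (f 0) := by rw [hg, hsnf 0]
  have hhh : h = a 1 • bM (f 1) := by rw [hh, hsnf 1]
  have hD : g.1 * h.2 - g.2 * h.1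
      = a 0 * a 1 * ((bM (f 0)).1 * (bM (f 1)).2 - (bM (f 0)).2 * (bM (f 1)).1) := by
    rw [hgh, hhh]
    simp [Prod.smul_def, smul_eq_mul]
    ring
  rw [hD, hindex]
  rcases hFin (f 0) with h0 | h0 <;> rcases hFin (f 1) with h1 | h1
  · exact absurd (f.injective (h0.trans h1.symm)) (by simp)
  · rw [h0, h1, Int.natAbs_mul, Int.natAbs_mul, hu1, mul_one]
  · rw [h0, h1]
    have : (bM 1).1 * (bM 0).2 - (bM 1).2 * (bM 0).1
        = -((bM 0).1 * (bM 1).2 - (bM 0).2 * (bM 1).1) := by ring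
    rw [this, Int.natAbs_mul, Int.natAbs_mul, Int.natAbs_neg, hu1, mul_one]
  · exact absurd (f.injective (h0.trans h1.symm)) (by simp)

/-- For a finite-index subgroup `N ≤ ℤ × ℤ` of index `r`, the set
`M = {m | ∀ n ∈ N, r ∣ ⟨n, m⟩}` is exactly the rotation of `N` by `π/2`,
i.e. the image of `N` under `(x, y) ↦ (-y, x)`. -/
theorem dual_lattice_eq_rotation
    (N : AddSubgroup (ℤ × ℤ)) (hN : N.index ≠ 0) (r : ℕ) (hr : r = N.index) :
    {m : ℤ × ℤ | ∀ n ∈ N, (r : ℤ) ∣ n.1 * m.1 + n.2 * m.2}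
      = (fun p : ℤ × ℤ => (-p.2, p.1)) '' (N : Set (ℤ × ℤ)) := by
  obtain ⟨g, h, hgN, hhN, hspan, hdet⟩ := aux_exists_basis N hN
  set d : ℤ := g.1 * h.2 - g.2 * h.1 with hd
  have hdr : d.natAbs = r := by rw [hdet, hr]
  have hd0 : d ≠ 0 := by
    intro h0
    rw [h0] at hdr
    exact hN (by rw [← hr, ← hdr]; rfl)
  have hrd : ∀ z : ℤ, (r : ℤ) ∣ z ↔ d ∣ z := by
    intro z
    rw [← hdr, Int.natAbs_dvd]
  ext m
  simp only [Set.mem_setOf_eq, Set.mem_image, SetLike.mem_coe]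
  constructor
  · intro hm
    set p : ℤ × ℤ := (m.2, -m.1) with hp
    have hDg : d ∣ g.1 * p.2 - g.2 * p.1 := by
      rw [← hrd]
      have := hm g hgN
      have heq : g.1 * p.2 - g.2 * p.1 = -(g.1 * m.1 + g.2 * m.2) := by
        rw [hp]; ring
      rw [heq]
      exact dvd_neg.mpr this
    have hDh : d ∣ h.1 * p.2 - h.2 * p.1 := by
      rw [← hrd]
      have := hm h hhN
      have heq : h.1 * p.2 - h.2 * p.1 = -(h.1 * m.1 + h.2 * m.2) := by
        rw [hp]; ring
      rw [heq]
      exact dvd_neg.mpr this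
    obtain ⟨β, hβ⟩ := hDg
    obtain ⟨α, hα⟩ : d ∣ p.1 * h.2 - p.2 * h.1 := by
      have : p.1 * h.2 - p.2 * h.1 = -(h.1 * p.2 - h.2 * p.1) := by ring
      rw [this]
      exact dvd_neg.mpr hDh
    have hcramer : d • p = d • (α • g + β • h) := by
      have h1 : d * p.1 = (d * α) * g.1 + (d * β) * h.1 := by
        rw [← hα, ← hβ, hd]; ring
      have h2 : d * p.2 = (d * α) * g.2 + (d * β) * h.2 := by
        rw [← hα, ← hβ, hd]; ring
      apply Prod.ext
      · simpa [smul_eq_mul, mul_assoc] using h1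
      · simpa [smul_eq_mul, mul_assoc] using h2
    have hpN : p ∈ N := by
      have hpe : p = α • g + β • h := smul_right_injective (ℤ × ℤ) hd0 hcramer
      rw [hpe]
      exact N.add_mem (N.zsmul_mem hgN _) (N.zsmul_mem hhN _)
    exact ⟨p, hpN, by rw [hp]; simp⟩
  · rintro ⟨q, hqN, rfl⟩
    intro n hn
    obtain ⟨α, β, rfl⟩ := hspan n hn
    obtain ⟨γ, δ, rfl⟩ := hspan q hqN
    rw [hrd]
    refine ⟨β * γ - α * δ, ?_⟩
    simp only [Prod.fst_add, Prod.snd_add, Prod.smul_fst, Prod.smul_snd, smul_eq_mul, hd]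
    ring
end

section
/- Let k, k' be integers with 0 ≤ k ≤ k' and k' > 0. For a positive integer s, let M_s := {(x, y) ∈ ℤ × ℤ : s divides y − kx}. Then: (1) a subgroup M ⊆ ℤ × ℤ contains the three points (1, k), (−1, k), (0, k + k') if and only if M = M_s for a unique positive divisor s of gcd(k + k', 2k); and (2) for each such s, the subgroup M_s has index s in ℤ × ℤ. -/
/-- The sublattice `M_s = {(x, y) : s ∣ y - k x}` of `ℤ × ℤ`. -/
def kiteSublattice (k : ℤ) (s : ℕ) : AddSubgroup (ℤ × ℤ) where
  carrier := {p : ℤ × ℤ | (s : ℤ) ∣ p.2 - k * p.1}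
  zero_mem' := by
    show (s : ℤ) ∣ (0 : ℤ × ℤ).2 - k * (0 : ℤ × ℤ).1
    simp
  add_mem' := by
    intro p q hp hq
    show (s : ℤ) ∣ (p + q).2 - k * (p + q).1
    simp only [Prod.fst_add, Prod.snd_add]
    have h : p.2 + q.2 - k * (p.1 + q.1) = (p.2 - k * p.1) + (q.2 - k * q.1) := by ring
    rw [h]
    exact dvd_add hp hq
  neg_mem' := by
    intro p hp
    show (s : ℤ) ∣ (-p).2 - k * (-p).1
    simp only [Prod.fst_neg, Prod.snd_neg]
    have h : -p.2 - k * -p.1 = -(p.2 - k * p.1) := by ring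
    rw [h]
    exact dvd_neg.2 hp

lemma mem_kiteSublattice {k : ℤ} {s : ℕ} {p : ℤ × ℤ} :
    p ∈ kiteSublattice k s ↔ (s : ℤ) ∣ p.2 - k * p.1 := Iff.rfl

/-- The defining hom onto `ZMod s`. -/
def kiteHom (k : ℤ) (s : ℕ) : (ℤ × ℤ) →+ ZMod s :=
  AddMonoidHom.mk' (fun p => ((p.2 - k * p.1 : ℤ) : ZMod s)) (by
    intro p q
    simp only [Prod.fst_add, Prod.snd_add]
    push_cast
    ring)

lemma kiteHom_surjective (k : ℤ) (s : ℕ) : Function.Surjective (kiteHom k s) := by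
  intro z
  obtain ⟨t, ht⟩ := ZMod.intCast_surjective (n := s) z
  exact ⟨((0 : ℤ), t), by simp [kiteHom, ht]⟩

lemma kiteSublattice_eq_ker (k : ℤ) (s : ℕ) :
    kiteSublattice k s = (kiteHom k s).ker := by
  ext p
  rw [mem_kiteSublattice, AddMonoidHom.mem_ker]
  show _ ↔ ((p.2 - k * p.1 : ℤ) : ZMod s) = 0
  rw [ZMod.intCast_zmod_eq_zero_iff_dvd]

lemma kiteSublattice_index (k : ℤ) (s : ℕ) (hs : 0 < s) :
    (kiteSublattice k s).index = s := by
  rw [kiteSublattice_eq_ker, AddSubgroup.index,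
    Nat.card_congr (QuotientAddGroup.quotientKerEquivOfSurjective _
      (kiteHom_surjective k s)).toEquiv, Nat.card_zmod]

/-- A subgroup `M ⊆ ℤ × ℤ` contains the three boundary lattice points
`(1, k)`, `(-1, k)`, `(0, k + k')` of the kite iff `M = M_s` for a unique
positive divisor `s` of `gcd (k + k') (2k)`; moreover each such `M_s`
has index `s` in `ℤ × ℤ`. -/
theorem kite_sublattice_classification (k k' : ℤ) (hk : 0 ≤ k) (hkk' : k ≤ k')
    (hk' : 0 < k') :
    (∀ M : AddSubgroup (ℤ × ℤ),
      (((1 : ℤ), k) ∈ M ∧ ((-1 : ℤ), k) ∈ M ∧ ((0 : ℤ), k + k') ∈ M) ↔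
        ∃! s : ℕ, 0 < s ∧ s ∣ Int.gcd (k + k') (2 * k) ∧ M = kiteSublattice k s) ∧
    (∀ s : ℕ, 0 < s → s ∣ Int.gcd (k + k') (2 * k) →
      (kiteSublattice k s).index = s) := by
  constructor
  · intro M
    constructor
    · rintro ⟨h1, h2, h3⟩
      -- the subgroup of y-axis values
      let S : AddSubgroup ℤ := M.comap ((AddMonoidHom.inl ℤ ℤ).comp 0 + AddMonoidHom.inr ℤ ℤ)
      have hSmem : ∀ t : ℤ, t ∈ S ↔ ((0 : ℤ), t) ∈ M := by
        intro t
        simp [S, AddSubgroup.mem_comap, Prod.ext_iff]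
      obtain ⟨a, ha⟩ := Int.subgroup_cyclic S
      have hmemS : ∀ t : ℤ, t ∈ S ↔ a ∣ t := by
        intro t
        rw [ha, AddSubgroup.mem_closure_singleton]
        constructor
        · rintro ⟨n, rfl⟩; exact ⟨n, by rw [mul_comm]; rfl⟩
        · rintro ⟨n, rfl⟩; exact ⟨n, by rw [mul_comm]; rfl⟩
      have h2k : (2 : ℤ) * k ∈ S := by
        rw [hSmem]
        have := M.add_mem h1 h2
        have he : (((1 : ℤ), k) + ((-1 : ℤ), k)) = (((0 : ℤ), 2 * k) : ℤ × ℤ) := by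
          simp [Prod.ext_iff]; ring
        rwa [he] at this
      have hkk : k + k' ∈ S := (hSmem _).2 h3
      have ha0 : a ≠ 0 := by
        rintro rfl
        have := (hmemS _).1 hkk
        simp at this
        omega
      set s : ℕ := a.natAbs with hs
      have hsa : (s : ℤ) ∣ a := (Int.natAbs_dvd).2 dvd_rfl
      have hmemS' : ∀ t : ℤ, t ∈ S ↔ (s : ℤ) ∣ t := by
        intro t
        rw [hmemS, ← Int.natAbs_dvd]
      -- M = kiteSublattice k s
      have hME : M = kiteSublattice k s := by
        ext p
        obtain ⟨x, y⟩ := p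
        rw [mem_kiteSublattice]
        have key : ((x : ℤ), y) ∈ M ↔ ((0 : ℤ), y - k * x) ∈ M := by
          constructor
          · intro h
            have hx : ((x : ℤ), k * x) ∈ M := by
              have := AddSubgroup.zsmul_mem M h1 x
              simpa [Prod.ext_iff, mul_comm] using this
            have := M.sub_mem h hx
            simpa [Prod.ext_iff] using this
          · intro h
            have hx : ((x : ℤ), k * x) ∈ M := by
              have := AddSubgroup.zsmul_mem M h1 x
              simpa [Prod.ext_iff, mul_comm] using this
            have := M.add_mem h hx
            simpa [Prod.ext_iff] using this
        rw [key, ← hSmem, hmemS']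
      refine ⟨s, ⟨?_, ?_, hME⟩, ?_⟩
      · exact Int.natAbs_pos.2 ha0
      · have d1 : (s : ℤ) ∣ k + k' := (hmemS' _).1 hkk
        have d2 : (s : ℤ) ∣ 2 * k := (hmemS' _).1 h2k
        have d1' : (s : ℤ) ∣ (k + k').natAbs := (Int.dvd_natAbs).2 d1
        have d2' : (s : ℤ) ∣ (2 * k).natAbs := (Int.dvd_natAbs).2 d2
        exact Nat.dvd_gcd (Int.ofNat_dvd.1 d1') (Int.ofNat_dvd.1 d2')
      · rintro t ⟨ht0, _, hMt⟩
        have e : kiteSublattice k t = kiteSublattice k s := by rw [← hMt, hME]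
        have hts : (t : ℤ) ∣ (s : ℤ) := by
          have : ((0 : ℤ), (s : ℤ)) ∈ kiteSublattice k t := by
            rw [e, mem_kiteSublattice]; simp
          simpa [mem_kiteSublattice] using this
        have hst : (s : ℤ) ∣ (t : ℤ) := by
          have : ((0 : ℤ), (t : ℤ)) ∈ kiteSublattice k s := by
            rw [← e, mem_kiteSublattice]; simp
          simpa [mem_kiteSublattice] using this
        exact Nat.dvd_antisymm (Int.ofNat_dvd.1 hts) (Int.ofNat_dvd.1 hst)
    · rintro ⟨s, ⟨hs0, hsd, rfl⟩, _⟩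
      have d1 : (s : ℤ) ∣ k + k' :=
        (Int.natCast_dvd_natCast.2 hsd).trans (Int.gcd_dvd_left _ _)
      have d2 : (s : ℤ) ∣ 2 * k :=
        (Int.natCast_dvd_natCast.2 hsd).trans (Int.gcd_dvd_right _ _)
      refine ⟨?_, ?_, ?_⟩
      · rw [mem_kiteSublattice]; simp
      · rw [mem_kiteSublattice]
        show (s : ℤ) ∣ k - k * (-1)
        have : k - k * (-1) = 2 * k := by ring
        rw [this]; exact d2
      · rw [mem_kiteSublattice]
        show (s : ℤ) ∣ k + k' - k * 0
        simpa using d1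
  · intro s hs0 _
    exact kiteSublattice_index k s hs0
end

section
/- Let k, k' be integers with 0 ≤ k ≤ k' and k' > 0, and let K ⊂ ℝ² be the convex hull of the four points (0,0), (1,k), (−1,k), (0,k+k'). Then the set of integer points lying in the topological interior of K is exactly {(0, j) : j ∈ ℤ, 0 < j < k + k'}; in particular, the number of interior lattice points of K is k + k' − 1. -/
-- Step 1: the kite equals an explicit intersection of half-planes.
theorem kite_hull_eq (k k' : ℕ) (hk' : 0 < k') :
    convexHull ℝ {((0:ℝ),(0:ℝ)), ((1:ℝ),(k:ℝ)), ((-1:ℝ),(k:ℝ)), ((0:ℝ),(k:ℝ)+(k':ℝ))}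
      = {p : ℝ × ℝ | (k:ℝ) * |p.1| ≤ p.2 ∧ p.2 + (k':ℝ) * |p.1| ≤ (k:ℝ) + (k':ℝ)} := by
  have hN : (0:ℝ) < (k:ℝ) + (k':ℝ) := by positivity
  have hk0 : (0:ℝ) ≤ (k:ℝ) := by positivity
  have hk'0 : (0:ℝ) ≤ (k':ℝ) := by positivity
  apply le_antisymm
  · apply convexHull_min
    · intro p hp
      simp only [Set.mem_insert_iff, Set.mem_singleton_iff] at hp
      rcases hp with rfl | rfl | rfl | rfl <;>
        constructor <;> simp <;> nlinarith [hN, hk0, hk'0]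
    · intro p hp q hq a b ha hb hab
      obtain ⟨hp1, hp2⟩ := hp
      obtain ⟨hq1, hq2⟩ := hq
      have habs : |a * p.1 + b * q.1| ≤ a * |p.1| + b * |q.1| := by
        calc |a * p.1 + b * q.1| ≤ |a * p.1| + |b * q.1| := abs_add_le _ _
          _ = a * |p.1| + b * |q.1| := by
              rw [abs_mul, abs_mul, abs_of_nonneg ha, abs_of_nonneg hb]
      constructor
      · show (k:ℝ) * |(a • p + b • q).1| ≤ (a • p + b • q).2
        simp only [Prod.fst_add, Prod.snd_add, Prod.smul_fst, Prod.smul_snd, smul_eq_mul]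
        nlinarith [mul_le_mul_of_nonneg_left habs hk0]
      · show (a • p + b • q).2 + (k':ℝ) * |(a • p + b • q).1| ≤ (k:ℝ) + (k':ℝ)
        simp only [Prod.fst_add, Prod.snd_add, Prod.smul_fst, Prod.smul_snd, smul_eq_mul]
        nlinarith [mul_le_mul_of_nonneg_left habs hk'0]
  · rintro ⟨x, y⟩ ⟨h1, h2⟩
    simp only [Set.mem_setOf_eq] at h1 h2
    set N : ℝ := (k:ℝ) + (k':ℝ) with hNdef
    have hbc : max x 0 + max (-x) 0 = |x| := by
      rcases le_total 0 x with h | h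
      · rw [max_eq_left h, max_eq_right (neg_nonpos_of_nonneg h), abs_of_nonneg h, add_zero]
      · rw [max_eq_right h, max_eq_left (neg_nonneg_of_nonpos h), abs_of_nonpos h, zero_add]
    have hbc' : max x 0 - max (-x) 0 = x := by
      rcases le_total 0 x with h | h
      · rw [max_eq_left h, max_eq_right (neg_nonpos_of_nonneg h), sub_zero]
      · rw [max_eq_right h, max_eq_left (neg_nonneg_of_nonpos h), zero_sub, neg_neg]
    set w : Fin 4 → ℝ := ![(N - (k':ℝ) * |x| - y) / N, max x 0, max (-x) 0, (y - (k:ℝ) * |x|) / N]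
      with hw
    set z : Fin 4 → ℝ × ℝ := ![((0:ℝ),(0:ℝ)), ((1:ℝ),(k:ℝ)), ((-1:ℝ),(k:ℝ)), ((0:ℝ), N)] with hz
    have had : (N - (k':ℝ) * |x| - y) / N + (y - (k:ℝ) * |x|) / N = 1 - |x| := by
      rw [← add_div, show N - (k':ℝ) * |x| - y + (y - (k:ℝ) * |x|) = N * (1 - |x|) by
        rw [hNdef]; ring, mul_div_cancel_left₀ _ (ne_of_gt hN)]
    have hwsum : ∑ i, w i = 1 := by
      rw [Fin.sum_univ_four]
      show (N - (k':ℝ) * |x| - y) / N + max x 0 + max (-x) 0 + (y - (k:ℝ) * |x|) / N = 1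
      linarith [had, hbc]
    have hmem : Finset.univ.centerMass w z ∈ convexHull ℝ
        ({((0:ℝ),(0:ℝ)), ((1:ℝ),(k:ℝ)), ((-1:ℝ),(k:ℝ)), ((0:ℝ), N)} : Set (ℝ × ℝ)) := by
      apply Finset.centerMass_mem_convexHull
      · intro i _
        fin_cases i
        · show (0:ℝ) ≤ (N - (k':ℝ) * |x| - y) / N
          apply div_nonneg _ hN.le; linarith
        · exact le_max_right x 0
        · exact le_max_right (-x) 0
        · show (0:ℝ) ≤ (y - (k:ℝ) * |x|) / N
          apply div_nonneg _ hN.le; linarith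
      · rw [hwsum]; norm_num
      · intro i _
        fin_cases i <;> simp [hz]
    have hcm : Finset.univ.centerMass w z = (x, y) := by
      rw [Finset.centerMass_eq_of_sum_1 _ _ hwsum, Fin.sum_univ_four]
      show ((N - (k':ℝ) * |x| - y) / N) • ((0:ℝ),(0:ℝ)) + (max x 0) • ((1:ℝ),(k:ℝ))
          + (max (-x) 0) • ((-1:ℝ),(k:ℝ)) + ((y - (k:ℝ) * |x|) / N) • ((0:ℝ), N) = (x, y)
      have hd : (y - (k:ℝ)*|x|)/N * N = y - (k:ℝ)*|x| := div_mul_cancel₀ _ (ne_of_gt hN)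
      have hbk : (max x 0)*(k:ℝ) + (max (-x) 0)*(k:ℝ) = (k:ℝ)*|x| := by rw [← hbc]; ring
      simp only [Prod.smul_mk, smul_eq_mul, Prod.mk_add_mk, Prod.mk.injEq]
      constructor
      · linarith [hbc']
      · linarith [hd, hbk]
    rw [← hcm]
    exact hmem

/-- The integer points in the topological interior of the kite with vertices
`(0,0)`, `(1,k)`, `(-1,k)`, `(0,k+k')` are exactly `(0, j)` for `0 < j < k + k'`;
in particular there are `k + k' - 1` of them. -/
theorem kite_interior_lattice_points (k k' : ℕ) (hkk' : k ≤ k') (hk' : 0 < k')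
    (K : Set (ℝ × ℝ))
    (hK : K = convexHull ℝ
      {((0 : ℝ), (0 : ℝ)), ((1 : ℝ), (k : ℝ)), ((-1 : ℝ), (k : ℝ)),
        ((0 : ℝ), (k : ℝ) + (k' : ℝ))}) :
    {p : ℤ × ℤ | ((p.1 : ℝ), (p.2 : ℝ)) ∈ interior K}
        = {p : ℤ × ℤ | p.1 = 0 ∧ 0 < p.2 ∧ p.2 < (k : ℤ) + (k' : ℤ)} ∧
      Set.ncard {p : ℤ × ℤ | ((p.1 : ℝ), (p.2 : ℝ)) ∈ interior K} = k + k' - 1 := by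
  have hKH : K = {p : ℝ × ℝ | (k:ℝ) * |p.1| ≤ p.2 ∧ p.2 + (k':ℝ) * |p.1| ≤ (k:ℝ) + (k':ℝ)} := by
    rw [hK, kite_hull_eq k k' hk']
  -- interior of K is the strict version
  have hint : interior K
      = {p : ℝ × ℝ | (k:ℝ) * |p.1| < p.2 ∧ p.2 + (k':ℝ) * |p.1| < (k:ℝ) + (k':ℝ)} := by
    apply le_antisymm
    · intro p hp
      rw [mem_interior_iff_mem_nhds, Metric.mem_nhds_iff] at hp
      obtain ⟨ε, hε, hball⟩ := hp
      have h1 : (p.1, p.2 - ε/2) ∈ K := by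
        apply hball
        simp only [Metric.mem_ball, Prod.dist_eq, Real.dist_eq]
        simp [abs_of_nonneg (le_of_lt (half_pos hε))]
        linarith
      have h2 : (p.1, p.2 + ε/2) ∈ K := by
        apply hball
        simp only [Metric.mem_ball, Prod.dist_eq, Real.dist_eq]
        simp [abs_of_nonneg (le_of_lt (half_pos hε))]
        linarith
      rw [hKH] at h1 h2
      obtain ⟨h1a, _⟩ := h1
      obtain ⟨_, h2b⟩ := h2
      simp only [Set.mem_setOf_eq] at h1a h2b ⊢
      constructor <;> linarith
    · apply interior_maximal
      · rw [hKH]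
        intro p hp
        exact ⟨le_of_lt hp.1, le_of_lt hp.2⟩
      · have : {p : ℝ × ℝ | (k:ℝ) * |p.1| < p.2 ∧ p.2 + (k':ℝ) * |p.1| < (k:ℝ) + (k':ℝ)}
            = {p : ℝ × ℝ | (k:ℝ) * |p.1| < p.2} ∩
              {p : ℝ × ℝ | p.2 + (k':ℝ) * |p.1| < (k:ℝ) + (k':ℝ)} := rfl
        rw [this]
        exact (isOpen_lt (by continuity) (by continuity)).inter
          (isOpen_lt (by continuity) (by continuity))
  have hset : {p : ℤ × ℤ | ((p.1 : ℝ), (p.2 : ℝ)) ∈ interior K}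
      = {p : ℤ × ℤ | p.1 = 0 ∧ 0 < p.2 ∧ p.2 < (k : ℤ) + (k' : ℤ)} := by
    ext ⟨a, b⟩
    simp only [hint, Set.mem_setOf_eq]
    constructor
    · rintro ⟨h1, h2⟩
      have ha : a = 0 := by
        by_contra h
        have : (1:ℝ) ≤ |(a:ℝ)| := by
          rw [← Int.cast_abs]
          exact_mod_cast Int.one_le_abs (by omega)
        have hN : (0:ℝ) < (k:ℝ) + (k':ℝ) := by positivity
        nlinarith [abs_nonneg ((a:ℝ))]
      subst ha
      simp only [Int.cast_zero, abs_zero, mul_zero] at h1 h2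
      refine ⟨rfl, by exact_mod_cast h1, ?_⟩
      have : (b:ℝ) < (k:ℝ) + (k':ℝ) := by linarith
      exact_mod_cast this
    · rintro ⟨ha, hb1, hb2⟩
      rw [ha]
      simp only [Int.cast_zero, abs_zero, mul_zero, add_zero]
      constructor
      · exact_mod_cast hb1
      · exact_mod_cast hb2
  refine ⟨hset, ?_⟩
  rw [hset]
  have himg : {p : ℤ × ℤ | p.1 = 0 ∧ 0 < p.2 ∧ p.2 < (k : ℤ) + (k' : ℤ)}
      = (fun j : ℤ => ((0:ℤ), j)) '' (Set.Ioo 0 ((k:ℤ) + (k':ℤ))) := by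
    ext ⟨a, b⟩
    simp only [Set.mem_setOf_eq, Set.mem_image, Set.mem_Ioo, Prod.mk.injEq]
    constructor
    · rintro ⟨rfl, h1, h2⟩; exact ⟨b, ⟨h1, h2⟩, rfl, rfl⟩
    · rintro ⟨j, ⟨h1, h2⟩, rfl, rfl⟩; exact ⟨rfl, h1, h2⟩
  rw [himg, Set.ncard_image_of_injective _ (fun i j h => by simpa using h)]
  rw [← Finset.coe_Ioo, Set.ncard_coe_finset, Int.card_Ioo]
  omega
end

section
/- Let k, k' be integers with 0 ≤ k ≤ k' and k' > 0, let K ⊂ ℝ² be the convex hull of (0,0), (1,k), (−1,k), (0,k+k'), and let s be a positive divisor of gcd(k + k', 2k). Set M_s := {(x, y) ∈ ℤ × ℤ : s divides y − kx}. Then the number of points of M_s lying in the topological interior of K equals (k + k')/s − 1. -/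

lemma kiteU_subset (k k' : ℝ) (hk : 0 ≤ k) (hk' : 0 < k')
    (p : ℝ × ℝ) (h1 : k * p.1 < p.2) (h2 : -(k * p.1) < p.2)
    (h3 : p.2 + k' * p.1 < k + k') (h4 : p.2 - k' * p.1 < k + k') :
    p ∈ convexHull ℝ ({((0:ℝ),(0:ℝ)), (1,k), (-1,k), (0,k+k')} : Set (ℝ × ℝ)) := by
  set K := convexHull ℝ ({((0:ℝ),(0:ℝ)), (1,k), (-1,k), (0,k+k')} : Set (ℝ×ℝ)) with hKdef
  have hKc : Convex ℝ K := convex_convexHull ℝ _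
  have hv0 : ((0:ℝ),(0:ℝ)) ∈ K := subset_convexHull ℝ _ (by simp)
  have hv1 : ((1:ℝ),k) ∈ K := subset_convexHull ℝ _ (by simp)
  have hv2 : ((-1:ℝ),k) ∈ K := subset_convexHull ℝ _ (by simp)
  have hv3 : ((0:ℝ),k+k') ∈ K := subset_convexHull ℝ _ (by simp)
  have hy0 : 0 < p.2 := by linarith
  have hytop : p.2 < k + k' := by linarith
  rcases le_or_gt p.2 k with hc | hc
  · -- lower triangle; here k > 0
    have hk0 : 0 < k := lt_of_lt_of_le hy0 hc
    have hqK : (p.1 * k / p.2, k) ∈ K := by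
      apply hKc.segment_subset hv1 hv2
      refine ⟨(1 + p.1 * k / p.2)/2, (1 - p.1 * k / p.2)/2, ?_, ?_, by ring, ?_⟩
      · have h : -1 ≤ p.1 * k / p.2 := by
          rw [neg_le, ← neg_div, div_le_one hy0]; nlinarith
        linarith
      · have h : p.1 * k / p.2 ≤ 1 := by
          rw [div_le_one hy0]; nlinarith
        linarith
      · simp [Prod.ext_iff, Prod.smul_def]
        constructor <;> ring
    apply hKc.segment_subset hv0 hqK
    refine ⟨1 - p.2/k, p.2/k, ?_, ?_, by ring, ?_⟩
    · have : p.2 / k ≤ 1 := by rw [div_le_one hk0]; linarith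
      linarith
    · positivity
    · simp [Prod.ext_iff, Prod.smul_def]
      constructor <;> (field_simp; try ring)
  · -- upper triangle
    have hd : 0 < k + k' - p.2 := by linarith
    have hrK : (p.1 * k' / (k + k' - p.2), k) ∈ K := by
      apply hKc.segment_subset hv1 hv2
      refine ⟨(1 + p.1 * k' / (k + k' - p.2))/2, (1 - p.1 * k' / (k + k' - p.2))/2,
        ?_, ?_, by ring, ?_⟩
      · have h : -1 ≤ p.1 * k' / (k + k' - p.2) := by
          rw [neg_le, ← neg_div, div_le_one hd]; nlinarith
        linarith
      · have h : p.1 * k' / (k + k' - p.2) ≤ 1 := by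
          rw [div_le_one hd]; nlinarith
        linarith
      · simp [Prod.ext_iff, Prod.smul_def]
        constructor <;> ring
    apply hKc.segment_subset hrK hv3
    refine ⟨(k + k' - p.2)/k', 1 - (k + k' - p.2)/k', ?_, ?_, by ring, ?_⟩
    · positivity
    · have : (k + k' - p.2)/k' ≤ 1 := by rw [div_le_one hk']; linarith
      linarith
    · simp [Prod.ext_iff, Prod.smul_def]
      constructor
      · field_simp
      · field_simp; ring

lemma kite_interior (k k' : ℝ) (hk : 0 ≤ k) (hk' : 0 < k') :
    interior (convexHull ℝ ({((0:ℝ),(0:ℝ)), (1,k), (-1,k), (0,k+k')} : Set (ℝ × ℝ))) =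
    {p : ℝ × ℝ | k * p.1 < p.2 ∧ -(k * p.1) < p.2 ∧
      p.2 + k' * p.1 < k + k' ∧ p.2 - k' * p.1 < k + k'} := by
  set K := convexHull ℝ ({((0:ℝ),(0:ℝ)), (1,k), (-1,k), (0,k+k')} : Set (ℝ×ℝ)) with hKdef
  set C : Set (ℝ × ℝ) := {p : ℝ × ℝ | k * p.1 ≤ p.2 ∧ -(k * p.1) ≤ p.2 ∧
      p.2 + k' * p.1 ≤ k + k' ∧ p.2 - k' * p.1 ≤ k + k'} with hCdef
  have hCconv : Convex ℝ C := by
    intro x hx y hy a b ha hb hab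
    obtain ⟨hx1, hx2, hx3, hx4⟩ := hx
    obtain ⟨hy1, hy2, hy3, hy4⟩ := hy
    refine ⟨?_, ?_, ?_, ?_⟩ <;>
      simp only [Prod.fst_add, Prod.snd_add, Prod.smul_fst, Prod.smul_snd, smul_eq_mul] <;>
      nlinarith [mul_le_mul_of_nonneg_left hx1 ha, mul_le_mul_of_nonneg_left hy1 hb,
        mul_le_mul_of_nonneg_left hx2 ha, mul_le_mul_of_nonneg_left hy2 hb,
        mul_le_mul_of_nonneg_left hx3 ha, mul_le_mul_of_nonneg_left hy3 hb,
        mul_le_mul_of_nonneg_left hx4 ha, mul_le_mul_of_nonneg_left hy4 hb]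
  have hKC : K ⊆ C := by
    rw [hKdef]
    apply convexHull_min _ hCconv
    rintro x hx
    simp only [Set.mem_insert_iff, Set.mem_singleton_iff] at hx
    rcases hx with rfl | rfl | rfl | rfl <;> refine ⟨?_, ?_, ?_, ?_⟩ <;> simp <;> linarith
  apply Set.Subset.antisymm
  · intro p hp
    obtain ⟨ε, hε, hball⟩ := Metric.mem_nhds_iff.1 (isOpen_interior.mem_nhds hp)
    have hsub : Metric.ball p ε ⊆ C := fun x hx => hKC (interior_subset (hball hx))
    have hlow : (p.1, p.2 - ε/2) ∈ C := by
      apply hsub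
      simp only [Metric.mem_ball, Prod.dist_eq, Real.dist_eq]
      simp
      rw [abs_of_nonneg (by linarith)]; linarith
    have hhigh : (p.1, p.2 + ε/2) ∈ C := by
      apply hsub
      simp only [Metric.mem_ball, Prod.dist_eq, Real.dist_eq]
      simp
      rw [abs_of_nonneg (by linarith)]; linarith
    obtain ⟨l1, l2, _, _⟩ := hlow
    obtain ⟨_, _, u3, u4⟩ := hhigh
    simp only at l1 l2 u3 u4
    exact ⟨by linarith, by linarith, by linarith, by linarith⟩
  · have hopen : IsOpen {p : ℝ × ℝ | k * p.1 < p.2 ∧ -(k * p.1) < p.2 ∧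
        p.2 + k' * p.1 < k + k' ∧ p.2 - k' * p.1 < k + k'} := by
      refine IsOpen.and ?_ (IsOpen.and ?_ (IsOpen.and ?_ ?_)) <;>
        apply isOpen_lt <;> fun_prop
    apply interior_maximal _ hopen
    intro p hp
    exact kiteU_subset k k' hk hk' p hp.1 hp.2.1 hp.2.2.1 hp.2.2.2

/-- The number of points of the index-`s` sublattice `M_s` lying in the
topological interior of the kite with vertices `(0,0)`, `(1,k)`, `(-1,k)`,
`(0,k+k')` equals `(k + k')/s - 1`. -/
theorem kite_interior_sublattice_points (k k' : ℕ) (hkk' : k ≤ k') (hk' : 0 < k')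
    (s : ℕ) (hs : 0 < s) (hdvd : s ∣ Nat.gcd (k + k') (2 * k))
    (K : Set (ℝ × ℝ))
    (hK : K = convexHull ℝ
      {((0 : ℝ), (0 : ℝ)), ((1 : ℝ), (k : ℝ)), ((-1 : ℝ), (k : ℝ)),
        ((0 : ℝ), (k : ℝ) + (k' : ℝ))}) :
    Set.ncard {p : ℤ × ℤ | p ∈ kiteSublattice (k : ℤ) s ∧
        ((p.1 : ℝ), (p.2 : ℝ)) ∈ interior K} = (k + k') / s - 1 := by
  have hsk : s ∣ k + k' := hdvd.trans (Nat.gcd_dvd_left _ _)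
  set n : ℕ := (k + k') / s with hn
  have hsn : s * n = k + k' := Nat.mul_div_cancel' hsk
  have hint : interior K = {p : ℝ × ℝ | (k:ℝ) * p.1 < p.2 ∧ -((k:ℝ) * p.1) < p.2 ∧
      p.2 + (k':ℝ) * p.1 < (k:ℝ) + (k':ℝ) ∧ p.2 - (k':ℝ) * p.1 < (k:ℝ) + (k':ℝ)} := by
    rw [hK]
    exact kite_interior (k:ℝ) (k':ℝ) (by positivity) (by exact_mod_cast hk')
  have hset : {p : ℤ × ℤ | p ∈ kiteSublattice (k : ℤ) s ∧
        ((p.1 : ℝ), (p.2 : ℝ)) ∈ interior K} =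
      (fun t : ℤ => ((0:ℤ), (s:ℤ) * t)) '' (Set.Ioo 0 (n:ℤ)) := by
    ext p
    simp only [Set.mem_setOf_eq, hint, Set.mem_image, Set.mem_Ioo]
    constructor
    · rintro ⟨hdv, h1, h2, h3, h4⟩
      have hdv' : (s:ℤ) ∣ p.2 - k * p.1 := hdv
      have h1' : (k:ℤ) * p.1 < p.2 := by exact_mod_cast h1
      have h2' : -((k:ℤ) * p.1) < p.2 := by exact_mod_cast h2
      have h3' : p.2 + (k':ℤ) * p.1 < (k:ℤ) + (k':ℤ) := by exact_mod_cast h3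
      have h4' : p.2 - (k':ℤ) * p.1 < (k:ℤ) + (k':ℤ) := by exact_mod_cast h4
      have hk0 : (0:ℤ) ≤ (k:ℤ) := Int.ofNat_nonneg k
      have hk'0 : (0:ℤ) < (k':ℤ) := by exact_mod_cast hk'
      have hp1 : p.1 = 0 := by
        by_contra hx
        rcases lt_or_gt_of_ne hx with h | h
        · have h' : p.1 ≤ -1 := by omega
          nlinarith
        · have h' : 1 ≤ p.1 := by omega
          nlinarith
      rw [hp1] at hdv' h1' h3'
      simp only [mul_zero, sub_zero] at hdv' h1' h3'
      obtain ⟨t, ht⟩ := hdv'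
      refine ⟨t, ⟨?_, ?_⟩, ?_⟩
      · have hst : (0:ℤ) < (s:ℤ) * t := by rw [← ht]; linarith
        by_contra hcon
        push_neg at hcon
        have : (s:ℤ) * t ≤ 0 := mul_nonpos_of_nonneg_of_nonpos (by positivity) hcon
        linarith
      · have hsn' : (s:ℤ) * (n:ℤ) = (k:ℤ) + (k':ℤ) := by exact_mod_cast hsn
        have hlt2 : (s:ℤ) * t < (s:ℤ) * n := by rw [← ht, hsn']; linarith
        exact lt_of_mul_lt_mul_left hlt2 (by positivity)
      · rw [Prod.ext_iff]
        exact ⟨hp1.symm, ht.symm⟩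
    · rintro ⟨t, ⟨ht0, htn⟩, rfl⟩
      have hs' : (0:ℤ) < (s:ℤ) := by exact_mod_cast hs
      have hpos : (0:ℤ) < (s:ℤ) * t := by positivity
      have hsn' : (s:ℤ) * (n:ℤ) = (k:ℤ) + (k':ℤ) := by exact_mod_cast hsn
      have hlt : (s:ℤ) * t < (k:ℤ) + (k':ℤ) := by
        rw [← hsn']; exact mul_lt_mul_of_pos_left htn hs'
      have hposR : (0:ℝ) < (s:ℝ) * (t:ℝ) := by exact_mod_cast hpos
      have hltR : (s:ℝ) * (t:ℝ) < (k:ℝ) + (k':ℝ) := by exact_mod_cast hlt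
      refine ⟨?_, ?_, ?_, ?_, ?_⟩
      · show (s:ℤ) ∣ ((0:ℤ), (s:ℤ)*t).2 - (k:ℤ) * ((0:ℤ), (s:ℤ)*t).1
        simp
      all_goals (simp only; push_cast; simp; linarith)
  rw [hset, Set.ncard_image_of_injective _ (fun a b hab => by
    simpa [Prod.ext_iff, hs.ne'] using hab)]
  rw [← Finset.coe_Ioo, Set.ncard_coe_finset, Int.card_Ioo]
  omega
end

section
/- Let G be an abelian group written additively, let d, m, n be nonnegative integers, let a, b be integers with a·m + b·n = 1, and let Q, R ∈ G satisfy (d·m)·Q = (d·n)·R. Set S' := a·R + b·Q. Then d·(Q − n·S') = 0 and d·(R − m·S') = 0; that is, Q − n·S' and R − m·S' are d-torsion elements. -/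
/-- In an abelian group, if `a m + b n = 1` and `(d m) • Q = (d n) • R`, then
`Q - n • S'` and `R - m • S'` are `d`-torsion, where `S' = a • R + b • Q`. -/
theorem torsion_of_bezout_relation {G : Type*} [AddCommGroup G]
    (d m n : ℕ) (a b : ℤ) (hab : a * (m : ℤ) + b * (n : ℤ) = 1)
    (Q R : G) (hQR : ((d : ℤ) * (m : ℤ)) • Q = ((d : ℤ) * (n : ℤ)) • R) :
    (d : ℤ) • (Q - (n : ℤ) • (a • R + b • Q)) = 0 ∧
      (d : ℤ) • (R - (m : ℤ) • (a • R + b • Q)) = 0 := by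
  have h : a * (m : ℤ) + b * (n : ℤ) - 1 = 0 := by linarith
  constructor
  · linear_combination (norm := module) a • hQR - ((d : ℤ) * h) • Q
  · linear_combination (norm := module) (-b) • hQR - ((d : ℤ) * h) • R
end
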